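/- Let k ≥ 1, N = 2k, and suppose |c_i| = ρ for all i, for some real ρ ≥ 0. Define L0(n) = M₊ for n even, M₋ for n odd, and L1(n) = M₋ for n even, M₊ for n odd. Suppose the sequence (Y_n) in ℂ^N satisfies Y_{n+2} = L0(n) Y_n + L1(n) Y_{n+1} for all n ≥ 0, with arbitrary initial conditions Y_0 = A and Y_1 = B. Then Y_2 = M₊ A + M₋ B; for every even n > 2, Y_n = (ρ^{n−4} D₊ + ρ^{n−2} M₋) B; and for every odd n > 2, Y_n = ρ^{n−3} (D₊ + M₋) B. -/

import Mathlib

/-- `M₊` sends `e_{N−i+1} ↦ c_i e_i` for `1 ≤ i ≤ k` and `e_j ↦ 0` for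
`1 ≤ j ≤ k` (here `N = 2k`; matrix with respect to the standard basis,
0-indexed). -/
noncomputable def Mplus (k : ℕ) (c : Fin k → ℂ) :
    Matrix (Fin (2 * k)) (Fin (2 * k)) ℂ := fun a b =>
  if h : (a : ℕ) < k ∧ (a : ℕ) + (b : ℕ) = 2 * k - 1 then c ⟨a, h.1⟩ else 0

/-- `M₋ = M₊†` sends `e_i ↦ conj(c_i) e_{N−i+1}` for `1 ≤ i ≤ k` and
`e_j ↦ 0` for `k < j ≤ N`. -/
noncomputable def Mminus (k : ℕ) (c : Fin k → ℂ) :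
    Matrix (Fin (2 * k)) (Fin (2 * k)) ℂ := fun a b =>
  if h : (b : ℕ) < k ∧ (a : ℕ) + (b : ℕ) = 2 * k - 1 then
    starRingEnd ℂ (c ⟨b, h.1⟩) else 0

/-- `D₊` sends `e_i ↦ |c_i|² e_i` for `1 ≤ i ≤ k` and `e_j ↦ 0` for
`k < j ≤ N`. -/
noncomputable def Dplus (k : ℕ) (c : Fin k → ℂ) :
    Matrix (Fin (2 * k)) (Fin (2 * k)) ℂ := fun a b =>
  if h : a = b ∧ (a : ℕ) < k then ((‖c ⟨a, h.2⟩‖) ^ 2 : ℂ) else 0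

/-- `D₋` sends `e_j ↦ |c_{N−j+1}|² e_j` for `k < j ≤ N` and `e_i ↦ 0` for
`1 ≤ i ≤ k`. -/
noncomputable def Dminus (k : ℕ) (c : Fin k → ℂ) :
    Matrix (Fin (2 * k)) (Fin (2 * k)) ℂ := fun a b =>
  if h : a = b ∧ k ≤ (a : ℕ) then
    ((‖c ⟨2 * k - 1 - (a : ℕ), by have := a.isLt; omega⟩‖) ^ 2 : ℂ)
  else 0

/-- `L0(n) = M₊` for `n` even, `M₋` for `n` odd. -/
noncomputable def Lzero (k : ℕ) (c : Fin k → ℂ) (n : ℕ) :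
    Matrix (Fin (2 * k)) (Fin (2 * k)) ℂ :=
  if Even n then Mplus k c else Mminus k c

/-- `L1(n) = M₋` for `n` even, `M₊` for `n` odd. -/
noncomputable def Lone (k : ℕ) (c : Fin k → ℂ) (n : ℕ) :
    Matrix (Fin (2 * k)) (Fin (2 * k)) ℂ :=
  if Even n then Mminus k c else Mplus k c

lemma MpMm (k : ℕ) (c : Fin k → ℂ) : Mplus k c * Mminus k c = Dplus k c := by
  ext a b
  rw [Matrix.mul_apply]
  by_cases ha : (a : ℕ) < k
  · have hlt : 2 * k - 1 - (a : ℕ) < 2 * k := by omega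
    set j0 : Fin (2 * k) := ⟨2 * k - 1 - (a : ℕ), hlt⟩ with hj0
    have hj0v : (j0 : ℕ) = 2 * k - 1 - (a : ℕ) := rfl
    rw [Finset.sum_eq_single j0 (fun j _ hj => by
      have hj' : (j : ℕ) ≠ 2 * k - 1 - (a : ℕ) := fun h =>
        hj (Fin.ext (h.trans hj0v.symm))
      have hne : ¬((a : ℕ) < k ∧ (a : ℕ) + (j : ℕ) = 2 * k - 1) := by omega
      simp only [Mplus]; rw [dif_neg hne, zero_mul]) (by simp)]
    have hP1 : (a : ℕ) < k ∧ (a : ℕ) + (j0 : ℕ) = 2 * k - 1 := ⟨ha, by omega⟩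
    simp only [Mplus, Mminus, Dplus]
    rw [dif_pos hP1]
    split_ifs with h2 h3 h4
    · obtain ⟨hab, -⟩ := h3
      subst hab
      rw [Complex.mul_conj']
    · exact absurd ⟨Fin.ext (by omega), ha⟩ h3
    · obtain ⟨hab, -⟩ := h4
      subst hab
      exact absurd ⟨ha, by omega⟩ h2
    · simp
  · rw [Finset.sum_eq_zero (fun j _ => by
      have hne : ¬((a : ℕ) < k ∧ (a : ℕ) + (j : ℕ) = 2 * k - 1) := fun h => ha h.1
      simp only [Mplus]; rw [dif_neg hne, zero_mul])]
    simp only [Dplus]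
    rw [dif_neg (fun h => ha h.2)]

lemma MpDp (k : ℕ) (c : Fin k → ℂ) : Mplus k c * Dplus k c = 0 := by
  ext a b
  rw [Matrix.mul_apply]
  simp only [Matrix.zero_apply]
  apply Finset.sum_eq_zero
  intro j _
  by_cases h1 : (a : ℕ) < k ∧ (a : ℕ) + (j : ℕ) = 2 * k - 1
  · have hne : ¬(j = b ∧ (j : ℕ) < k) := by
      rintro ⟨-, hjk⟩; omega
    simp only [Dplus]; rw [dif_neg hne, mul_zero]
  · simp only [Mplus]; rw [dif_neg h1, zero_mul]

lemma MpMp (k : ℕ) (c : Fin k → ℂ) : Mplus k c * Mplus k c = 0 := by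
  ext a b
  rw [Matrix.mul_apply]
  simp only [Matrix.zero_apply]
  apply Finset.sum_eq_zero
  intro j _
  by_cases h1 : (a : ℕ) < k ∧ (a : ℕ) + (j : ℕ) = 2 * k - 1
  · have hne : ¬((j : ℕ) < k ∧ (j : ℕ) + (b : ℕ) = 2 * k - 1) := by omega
    simp only [Mplus]; rw [dif_neg hne, mul_zero]
  · simp only [Mplus]; rw [dif_neg h1, zero_mul]

lemma MmMm (k : ℕ) (c : Fin k → ℂ) : Mminus k c * Mminus k c = 0 := by
  ext a b
  rw [Matrix.mul_apply]
  simp only [Matrix.zero_apply]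
  apply Finset.sum_eq_zero
  intro j _
  by_cases h1 : (j : ℕ) < k ∧ (a : ℕ) + (j : ℕ) = 2 * k - 1
  · have hne : ¬((b : ℕ) < k ∧ (j : ℕ) + (b : ℕ) = 2 * k - 1) := by omega
    simp only [Mminus]; rw [dif_neg hne, mul_zero]
  · have h0 : (if h : (j : ℕ) < k ∧ (a : ℕ) + (j : ℕ) = 2 * k - 1 then
        starRingEnd ℂ (c ⟨j, h.1⟩) else 0) = 0 := dif_neg h1
    simp only [Mminus]; rw [h0, zero_mul]

lemma MmDp (k : ℕ) (c : Fin k → ℂ) (ρ : ℝ) (hc : ∀ i, ‖c i‖ = ρ) :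
    Mminus k c * Dplus k c = ((ρ ^ 2 : ℝ) : ℂ) • Mminus k c := by
  ext a b
  rw [Matrix.mul_apply]
  simp only [Matrix.smul_apply]
  rw [Finset.sum_eq_single b (fun j _ hj => by
      have hne : ¬(j = b ∧ (j : ℕ) < k) := fun h => hj h.1
      simp only [Dplus]; rw [dif_neg hne, mul_zero]) (by simp)]
  simp only [Mminus, Dplus]
  split_ifs with h1 h2 h3
  · rw [hc]
    rw [smul_eq_mul]
    push_cast
    ring
  · exact absurd ⟨trivial, h1.1⟩ h2
  · rw [zero_mul, smul_zero]
  · rw [zero_mul, smul_zero]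

/-- Solution of the general Cauchy problem: if `|c_i| = ρ` for all `i` and
`Y_{n+2} = L0(n) Y_n + L1(n) Y_{n+1}` with `Y_0 = A`, `Y_1 = B`, then
`Y_2 = M₊ A + M₋ B`, `Y_n = (ρ^{n−4} D₊ + ρ^{n−2} M₋) B` for even `n > 2`,
and `Y_n = ρ^{n−3} (D₊ + M₋) B` for odd `n > 2`. -/
theorem cauchy_problem_general_solution (k : ℕ) (hk : 1 ≤ k) (c : Fin k → ℂ)
    (ρ : ℝ) (hρ : 0 ≤ ρ) (hc : ∀ i, ‖c i‖ = ρ)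
    (Y : ℕ → (Fin (2 * k) → ℂ)) (A B : Fin (2 * k) → ℂ)
    (hrec : ∀ n : ℕ, Y (n + 2)
      = (Lzero k c n).mulVec (Y n) + (Lone k c n).mulVec (Y (n + 1)))
    (h0 : Y 0 = A) (h1 : Y 1 = B) :
    Y 2 = (Mplus k c).mulVec A + (Mminus k c).mulVec B ∧
    (∀ n : ℕ, 2 < n → Even n →
      Y n = (((ρ ^ (n - 4) : ℝ) : ℂ) • Dplus k c
              + ((ρ ^ (n - 2) : ℝ) : ℂ) • Mminus k c).mulVec B) ∧
    (∀ n : ℕ, 2 < n → Odd n →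
      Y n = (((ρ ^ (n - 3) : ℝ) : ℂ) • (Dplus k c + Mminus k c)).mulVec B) := by
  have hY2 : Y 2 = (Mplus k c).mulVec A + (Mminus k c).mulVec B := by
    have h := hrec 0
    rw [h0, h1] at h
    simpa [Lzero, Lone] using h
  have hMmDM : Mminus k c * (Dplus k c + Mminus k c)
      = ((ρ ^ 2 : ℝ) : ℂ) • Mminus k c := by
    rw [mul_add, MmMm, add_zero, MmDp k c ρ hc]
  have hY3 : Y 3 = (Dplus k c + Mminus k c).mulVec B := by
    have h := hrec 1
    have hne : ¬ Even 1 := by decide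
    rw [Lzero, Lone, if_neg hne, if_neg hne, h1, hY2, Matrix.mulVec_add,
      Matrix.mulVec_mulVec, Matrix.mulVec_mulVec, MpMp, MpMm,
      Matrix.zero_mulVec, zero_add] at h
    rw [show (3:ℕ) = 1 + 2 from rfl, h, Matrix.add_mulVec, add_comm]
  have hY4 : Y 4 = (((ρ ^ (0:ℕ) : ℝ) : ℂ) • Dplus k c
      + ((ρ ^ (2:ℕ) : ℝ) : ℂ) • Mminus k c).mulVec B := by
    have h := hrec 2
    have he : Even 2 := by decide
    rw [Lzero, Lone, if_pos he, if_pos he, hY2, hY3, Matrix.mulVec_add,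
      Matrix.mulVec_mulVec, Matrix.mulVec_mulVec, Matrix.mulVec_mulVec,
      MpMp, MpMm, hMmDM, Matrix.zero_mulVec, zero_add] at h
    rw [show (4:ℕ) = 2 + 2 from rfl, h, Matrix.add_mulVec,
      Matrix.smul_mulVec, Matrix.smul_mulVec]
    norm_num
  have key : ∀ m : ℕ,
      Y (2 * m + 3)
        = (((ρ ^ (2 * m) : ℝ) : ℂ) • (Dplus k c + Mminus k c)).mulVec B ∧
      Y (2 * m + 4)
        = (((ρ ^ (2 * m) : ℝ) : ℂ) • Dplus k c
            + ((ρ ^ (2 * m + 2) : ℝ) : ℂ) • Mminus k c).mulVec B := by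
    intro m
    induction m with
    | zero =>
      constructor
      · simpa using hY3
      · simpa using hY4
    | succ m ih =>
      obtain ⟨ih3, ih4⟩ := ih
      have hodd : ¬ Even (2 * m + 3) := by
        rintro ⟨t, ht⟩; omega
      have heven : Even (2 * m + 4) := ⟨m + 2, by ring⟩
      have hs : ((ρ ^ (2 * m) : ℝ) : ℂ) * ((ρ ^ 2 : ℝ) : ℂ)
          = ((ρ ^ (2 * m + 2) : ℝ) : ℂ) := by
        push_cast; ring
      have h5 : Y (2 * m + 5)
          = (((ρ ^ (2 * m + 2) : ℝ) : ℂ) • (Dplus k c + Mminus k c)).mulVec B := by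
        have h := hrec (2 * m + 3)
        rw [Lzero, Lone, if_neg hodd, if_neg hodd, ih3, ih4,
          Matrix.mulVec_mulVec, Matrix.mulVec_mulVec,
          Matrix.mul_smul, hMmDM, smul_smul, hs,
          mul_add, Matrix.mul_smul, Matrix.mul_smul, MpDp, MpMm,
          smul_zero, zero_add] at h
        rw [show 2 * m + 5 = 2 * m + 3 + 2 from by ring, h, smul_add,
          Matrix.add_mulVec, add_comm]
      have h6 : Y (2 * m + 6)
          = (((ρ ^ (2 * m + 2) : ℝ) : ℂ) • Dplus k c
              + ((ρ ^ (2 * m + 4) : ℝ) : ℂ) • Mminus k c).mulVec B := by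
        have h := hrec (2 * m + 4)
        have hs2 : ((ρ ^ (2 * m + 2) : ℝ) : ℂ) * ((ρ ^ 2 : ℝ) : ℂ)
            = ((ρ ^ (2 * m + 4) : ℝ) : ℂ) := by
          push_cast; ring
        rw [Lzero, Lone, if_pos heven, if_pos heven, ih4,
          show 2 * m + 4 + 1 = 2 * m + 5 from by ring, h5,
          Matrix.mulVec_mulVec, Matrix.mulVec_mulVec,
          mul_add, Matrix.mul_smul, Matrix.mul_smul, MpDp, MpMm,
          smul_zero, zero_add,
          Matrix.mul_smul, hMmDM, smul_smul, hs2] at h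
        rw [show 2 * m + 6 = 2 * m + 4 + 2 from by ring, h, Matrix.add_mulVec]
      constructor
      · rw [show 2 * (m + 1) + 3 = 2 * m + 5 from by ring,
          show 2 * (m + 1) = 2 * m + 2 from by ring]
        exact h5
      · rw [show 2 * (m + 1) + 4 = 2 * m + 6 from by ring,
          show 2 * (m + 1) = 2 * m + 2 from by ring,
          show 2 * m + 2 + 2 = 2 * m + 4 from by ring]
        exact h6
  refine ⟨hY2, ?_, ?_⟩
  · intro n hn hne
    obtain ⟨t, ht⟩ := hne
    have hm : ∃ m, n = 2 * m + 4 := ⟨t - 2, by omega⟩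
    obtain ⟨m, rfl⟩ := hm
    rw [show 2 * m + 4 - 4 = 2 * m from by omega,
      show 2 * m + 4 - 2 = 2 * m + 2 from by omega]
    exact (key m).2
  · intro n hn hno
    obtain ⟨t, ht⟩ := hno
    have hm : ∃ m, n = 2 * m + 3 := ⟨t - 1, by omega⟩
    obtain ⟨m, rfl⟩ := hm
    rw [show 2 * m + 3 - 3 = 2 * m from by omega]
    exact (key m).1
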